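/- Let r ≥ 1, let n_1, ..., n_r be natural numbers, let σ_2, ..., σ_r be positive real numbers, and define v(x) = x^{n_1} · ∏_{i=2}^{r} (x + σ_i)^{n_i}. Let κ_1 < 0 and define, for s > 0, α(s) = e^{κ_1 s} · v(s)^{-1} · ∫_0^s (x + 2n_1 + 2) · e^{-κ_1 x} v(x) dx. Then α(s) > 0 for all s > 0 and α(s)/s tends to -1/κ_1 as s → +∞. -/

import Mathlib

open Polynomial Filter Real

/-- Expanding soliton metric coefficient with `κ₁ < 0`: `α` is positive on `(0,∞)`
and grows linearly, `α(s)/s → -1/κ₁` (asymptotically conical end). -/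
theorem stmt_12 (r : ℕ) (hr : 1 ≤ r) (n : ℕ → ℕ) (σ : ℕ → ℝ)
    (hσ : ∀ i ∈ Finset.Icc 2 r, 0 < σ i)
    (v : ℝ → ℝ) (hv : ∀ x, v x = x ^ n 1 * ∏ i ∈ Finset.Icc 2 r, (x + σ i) ^ n i)
    (κ1 : ℝ) (hκ1 : κ1 < 0)
    (α : ℝ → ℝ)
    (hα : ∀ s, α s = Real.exp (κ1 * s) * (v s)⁻¹ *
      ∫ x in (0:ℝ)..s, (x + 2 * (n 1 : ℝ) + 2) * Real.exp (-κ1 * x) * v x) :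
    (∀ s : ℝ, 0 < s → 0 < α s) ∧
      Filter.Tendsto (fun s => α s / s) Filter.atTop (nhds (-1 / κ1)) := by
  have hκ1' : κ1 ≠ 0 := ne_of_lt hκ1
  set c : ℝ := 2 * (n 1 : ℝ) + 2 with hc
  have hcpos : 0 < c := by positivity
  simp only [show ∀ x : ℝ, x + 2 * (n 1 : ℝ) + 2 = x + c from fun x => by rw [hc]; ring] at hα
  set V : ℝ[X] := X ^ n 1 * ∏ i ∈ Finset.Icc 2 r, (X + C (σ i)) ^ n i with hV
  have hVmonic : V.Monic := by
    exact (monic_X_pow _).mul (monic_prod_of_monic _ _ fun i _ => (monic_X_add_C _).pow _)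
  have hVeval : ∀ x, V.eval x = v x := by
    intro x
    simp [hV, hv, eval_prod]
  -- positivity of v on (0,∞)
  have hvpos : ∀ x : ℝ, 0 < x → 0 < v x := by
    intro x hx
    rw [hv]
    refine mul_pos (pow_pos hx _) (Finset.prod_pos fun i hi => pow_pos (by linarith [hσ i hi]) _)
  set P : ℝ[X] := (X + C c) * V with hP
  have hPmonic : P.Monic := (monic_X_add_C c).mul hVmonic
  have hPeval : ∀ x, P.eval x = (x + c) * v x := by
    intro x; simp [hP, hVeval]
  set m : ℕ := P.natDegree with hm
  have hmdeg : m = 1 + V.natDegree := by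
    rw [hm, hP, (monic_X_add_C c).natDegree_mul hVmonic, natDegree_X_add_C]
  -- the polynomial antiderivative
  set g : ℝ[X] := -∑ k ∈ Finset.range (m + 1), derivative^[k] P * C (κ1⁻¹ ^ (k + 1)) with hg
  have hkey : derivative g - C κ1 * g = P := by
    have h1 : derivative g = -∑ k ∈ Finset.range (m + 1),
        derivative^[k + 1] P * C (κ1⁻¹ ^ (k + 1)) := by
      rw [hg, derivative_neg, derivative_sum]
      congr 1
      refine Finset.sum_congr rfl fun k _ => ?_
      rw [derivative_mul, derivative_C, mul_zero, add_zero, Function.iterate_succ_apply']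
    have h2 : C κ1 * g = -∑ k ∈ Finset.range (m + 1),
        derivative^[k] P * C (κ1⁻¹ ^ k) := by
      rw [hg, mul_neg, Finset.mul_sum]
      congr 1
      refine Finset.sum_congr rfl fun k _ => ?_
      rw [mul_comm (C κ1), mul_assoc, ← C_mul]
      congr 2
      rw [pow_succ, mul_assoc, inv_mul_cancel₀ hκ1', mul_one]
    rw [h1, h2, neg_sub_neg, ← Finset.sum_sub_distrib,
      Finset.sum_range_sub' (fun k => derivative^[k] P * C (κ1⁻¹ ^ k)) (m + 1)]
    have hz : derivative^[m + 1] P = 0 := by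
      apply iterate_derivative_eq_zero
      omega
    simp [hz]
  -- the fundamental derivative identity
  have hFderiv : ∀ x : ℝ, HasDerivAt (fun t => Real.exp (-κ1 * t) * g.eval t)
      ((x + c) * Real.exp (-κ1 * x) * v x) x := by
    intro x
    have h1 : HasDerivAt (fun t => Real.exp (-κ1 * t)) (-κ1 * Real.exp (-κ1 * x)) x := by
      have := (Real.hasDerivAt_exp (-κ1 * x)).comp x ((hasDerivAt_id x).const_mul (-κ1))
      simpa [Function.comp_def, mul_comm] using this
    have h2 : HasDerivAt (fun t => g.eval t) (g.derivative.eval x) x := g.hasDerivAt x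
    have := h1.mul h2
    refine HasDerivAt.congr_deriv this ?_
    have : derivative g = P + C κ1 * g := by rw [← hkey]; ring
    rw [this]
    simp only [eval_add, eval_mul, eval_C, hPeval]
    ring
  -- continuity of the integrand
  have hcont : Continuous fun x : ℝ => (x + c) * Real.exp (-κ1 * x) * v x := by
    have : (fun x : ℝ => (x + c) * Real.exp (-κ1 * x) * v x)
        = fun x => Real.exp (-κ1 * x) * P.eval x := by
      funext x; rw [hPeval]; ring
    rw [this]
    exact (Real.continuous_exp.comp (continuous_const.mul continuous_id)).mul P.continuous
  -- closed form of the integral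
  have hint : ∀ s : ℝ, (∫ x in (0:ℝ)..s, (x + c) * Real.exp (-κ1 * x) * v x)
      = Real.exp (-κ1 * s) * g.eval s - Real.exp (-κ1 * 0) * g.eval 0 := by
    intro s
    exact intervalIntegral.integral_eq_sub_of_hasDerivAt
      (fun x _ => hFderiv x) (hcont.intervalIntegrable _ _)
  -- positivity
  have hpos : ∀ s : ℝ, 0 < s → 0 < α s := by
    intro s hs
    rw [hα]
    refine mul_pos (mul_pos (Real.exp_pos _) (inv_pos.mpr (hvpos s hs))) ?_
    refine intervalIntegral.intervalIntegral_pos_of_pos_on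
      (hcont.intervalIntegrable _ _) (fun x hx => ?_) hs
    have hx0 : 0 < x := hx.1
    exact mul_pos (mul_pos (by linarith) (Real.exp_pos _)) (hvpos x hx0)
  refine ⟨hpos, ?_⟩
  have hm1 : 1 ≤ m := by omega
  set Q : ℝ[X] := X * V with hQ
  have hQmonic : Q.Monic := monic_X.mul hVmonic
  have hQnat : Q.natDegree = m := by
    rw [hQ, monic_X.natDegree_mul hVmonic, natDegree_X, hmdeg]
  have hQeval : ∀ x, Q.eval x = x * v x := fun x => by simp [hQ, hVeval]
  -- leading coefficient of g
  have hgcoeff : g.coeff m = -κ1⁻¹ := by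
    rw [hg, coeff_neg, finset_sum_coeff]
    rw [Finset.sum_eq_single 0]
    · rw [Function.iterate_zero_apply, coeff_mul_C, hPmonic.coeff_natDegree]
      simp
    · intro k hk hk0
      rw [coeff_mul_C, coeff_eq_zero_of_natDegree_lt, zero_mul]
      calc (derivative^[k] P).natDegree ≤ P.natDegree - k := natDegree_iterate_derivative P k
        _ < m := by omega
    · intro h
      exact absurd (Finset.mem_range.mpr (by omega)) h
  have hgnatle : g.natDegree ≤ m := by
    rw [hg, natDegree_neg]
    refine natDegree_sum_le_of_forall_le _ _ fun k _ => ?_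
    calc (derivative^[k] P * C (κ1⁻¹ ^ (k + 1))).natDegree
        ≤ (derivative^[k] P).natDegree + (C (κ1⁻¹ ^ (k + 1))).natDegree := natDegree_mul_le
      _ ≤ (P.natDegree - k) + 0 := add_le_add (natDegree_iterate_derivative P k) (by simp)
      _ ≤ m := by omega
  have hgc0 : g.coeff m ≠ 0 := by
    rw [hgcoeff]
    simp [hκ1']
  have hgnat : g.natDegree = m := le_antisymm hgnatle (le_natDegree_of_ne_zero hgc0)
  have hgne : g ≠ 0 := fun h => hgc0 (by simp [h])
  have hgdeg : g.degree = Q.degree := by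
    rw [degree_eq_natDegree hgne, degree_eq_natDegree hQmonic.ne_zero, hgnat, hQnat]
  have hglead : g.leadingCoeff = -κ1⁻¹ := by
    rw [leadingCoeff, hgnat, hgcoeff]
  -- the three limits
  have h1 : Tendsto (fun x => g.eval x / Q.eval x) atTop (nhds (-1 / κ1)) := by
    have := div_tendsto_leadingCoeff_div_of_degree_eq g Q hgdeg
    rw [hglead, hQmonic.leadingCoeff, div_one] at this
    rwa [show (-1 : ℝ) / κ1 = -κ1⁻¹ by rw [neg_div, one_div]]
  have h2 : Tendsto (fun x => Q.eval x) atTop atTop := by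
    refine Q.tendsto_atTop_of_leadingCoeff_nonneg ?_ (hQmonic.leadingCoeff ▸ zero_le_one)
    rw [degree_eq_natDegree hQmonic.ne_zero, hQnat]
    exact_mod_cast hm1
  have h3 : Tendsto (fun s => g.eval 0 / Q.eval s) atTop (nhds 0) :=
    tendsto_const_nhds.div_atTop h2
  have h4 : Tendsto (fun s => Real.exp (κ1 * s)) atTop (nhds 0) := by
    rw [Real.tendsto_exp_comp_nhds_zero]
    exact (tendsto_const_mul_atBot_of_neg hκ1).mpr tendsto_id
  have hlim : Tendsto (fun s => g.eval s / Q.eval s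
      - Real.exp (κ1 * s) * (g.eval 0 / Q.eval s)) atTop (nhds (-1 / κ1)) := by
    have := h1.sub (h4.mul h3)
    simpa using this
  refine Tendsto.congr' ?_ hlim
  filter_upwards [eventually_gt_atTop (0 : ℝ)] with s hs
  have hvs : 0 < v s := hvpos s hs
  rw [hα s, hint s, hQeval s]
  rw [neg_mul, Real.exp_neg, neg_mul, Real.exp_neg, mul_zero, Real.exp_zero]
  field_simp
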